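/- Let K be a number field. Suppose there exist real numbers k₁ > 1, k₂ > 1 and k₃ > 0 such that for every finite set S of nonzero prime ideals of O_K and every u ∈ K ∖ {0,1} with both u and 1 − u S-units, one has h_K(u:1) ≤ k₁·∑_{𝔮 ∈ S} log N(𝔮) + k₂·log d_K + k₃. Then for all a, b, c ∈ K ∖ {0} with a + b = c, one has h_K(a:b:c) ≤ k₁·rad(a:b:c) + k₂·log d_K + k₃ + [K:ℚ]·log 2. (This is the instance of the paper's Theorem that the hypothesis Siegel(U,K) implies the abc conjecture over K, for the curve U = ℙ¹ ∖ {0,1,∞} with the identity as Belyi function.) -/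

import Mathlib

open NumberField IsDedekindDomain

/-- The additive `𝔭`-adic valuation `v_𝔭(x)` of `x ∈ K^×`, extended by `0` at `x = 0`. -/
noncomputable def vIntK (K : Type) [Field K] [NumberField K]
    (v : HeightOneSpectrum (𝓞 K)) (x : K) : ℤ :=
  if h : v.valuation K x = 0 then 0 else -Multiplicative.toAdd (WithZero.unzero h)

/-- `log N(𝔭)`, the logarithm of the absolute norm of the prime ideal `𝔭`. -/
noncomputable def logNormK (K : Type) [Field K] [NumberField K]
    (v : HeightOneSpectrum (𝓞 K)) : ℝ :=
  Real.log (Ideal.absNorm v.asIdeal)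

/-- The relative height `h_K(x₀:x₁:x₂) = ∑_v d_v log max_i |x_i|_v`: the archimedean part is a
sum over the infinite places weighted by the local degrees `mult w`, and at a finite place `𝔭`
one has `d_𝔭 · log max_i |x_i|_𝔭 = (max_i (-v_𝔭(x_i))) · log N(𝔭)`. -/
noncomputable def heightProjK (K : Type) [Field K] [NumberField K] (x₀ x₁ x₂ : K) : ℝ :=
  (∑ w : InfinitePlace K, (w.mult : ℝ) * Real.log (max (w x₀) (max (w x₁) (w x₂))))
    + ∑ᶠ v : HeightOneSpectrum (𝓞 K),
        ((max (-(vIntK K v x₀)) (max (-(vIntK K v x₁)) (-(vIntK K v x₂))) : ℤ) : ℝ)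
          * logNormK K v

/-- The relative height `h_K(u:1) = ∑_v d_v log max (|u|_v, 1)`. -/
noncomputable def height1K (K : Type) [Field K] [NumberField K] (u : K) : ℝ :=
  (∑ w : InfinitePlace K, (w.mult : ℝ) * Real.log (max (w u) 1))
    + ∑ᶠ v : HeightOneSpectrum (𝓞 K), ((max (-(vIntK K v u)) 0 : ℤ) : ℝ) * logNormK K v

/-- The radical `rad(x₀:x₁:x₂) = ∑ log N(𝔭)`, summed over the nonzero prime ideals `𝔭` for
which the set `{v_𝔭(x₀), v_𝔭(x₁), v_𝔭(x₂)}` has at least two elements. -/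
noncomputable def radK (K : Type) [Field K] [NumberField K] (x₀ x₁ x₂ : K) : ℝ :=
  ∑ᶠ v : HeightOneSpectrum (𝓞 K),
    if 2 ≤ ({vIntK K v x₀, vIntK K v x₁, vIntK K v x₂} : Finset ℤ).card
    then logNormK K v else 0

/-- `log d_K`, the logarithm of the absolute value of the discriminant of `K`. -/
noncomputable def logDiscK (K : Type) [Field K] [NumberField K] : ℝ :=
  Real.log |(NumberField.discr K : ℝ)|

section Aux
variable (K : Type) [Field K] [NumberField K]

lemma vIntK_spec (v : HeightOneSpectrum (𝓞 K)) {x : K} (hx : x ≠ 0) :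
    v.valuation K x = ((Multiplicative.ofAdd (-(vIntK K v x)) : Multiplicative ℤ) :
      WithZero (Multiplicative ℤ)) := by
  have h : v.valuation K x ≠ 0 := (Valuation.ne_zero_iff _).mpr hx
  rw [vIntK, dif_neg h, neg_neg, ofAdd_toAdd, WithZero.coe_unzero]

lemma vIntK_eq_of (v : HeightOneSpectrum (𝓞 K)) {x : K} (hx : x ≠ 0) {m : ℤ}
    (h : v.valuation K x = ((Multiplicative.ofAdd (-m) : Multiplicative ℤ) :
      WithZero (Multiplicative ℤ))) :
    vIntK K v x = m := by
  have h2 := vIntK_spec K v hx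
  rw [h] at h2
  have h3 := Multiplicative.ofAdd.injective (WithZero.coe_inj.mp h2.symm)
  omega

lemma vIntK_mul (v : HeightOneSpectrum (𝓞 K)) {x y : K} (hx : x ≠ 0) (hy : y ≠ 0) :
    vIntK K v (x * y) = vIntK K v x + vIntK K v y := by
  refine vIntK_eq_of K v (mul_ne_zero hx hy) ?_
  rw [map_mul, vIntK_spec K v hx, vIntK_spec K v hy, ← WithZero.coe_mul, ← ofAdd_add]
  ring_nf

lemma vIntK_one (v : HeightOneSpectrum (𝓞 K)) : vIntK K v (1 : K) = 0 := by
  refine vIntK_eq_of K v one_ne_zero ?_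
  rw [map_one]; rfl

lemma vIntK_div (v : HeightOneSpectrum (𝓞 K)) {x y : K} (hx : x ≠ 0) (hy : y ≠ 0) :
    vIntK K v (x / y) = vIntK K v x - vIntK K v y := by
  have h := vIntK_mul K v (div_ne_zero hx hy) hy
  rw [div_mul_cancel₀ _ hy] at h
  omega

lemma vIntK_one_sub (v : HeightOneSpectrum (𝓞 K)) {u : K} (hu : u ≠ 0) (hu1 : u ≠ 1) :
    -vIntK K v (1 - u) ≤ max (-vIntK K v u) 0 := by
  have h1 : (1 : K) - u ≠ 0 := sub_ne_zero.mpr (Ne.symm hu1)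
  have hle : v.valuation K (1 - u) ≤ max (v.valuation K (1 : K)) (v.valuation K u) :=
    Valuation.map_sub _ _ _
  rw [map_one, vIntK_spec K v h1, vIntK_spec K v hu] at hle
  rcases le_max_iff.mp hle with h | h
  · have : Multiplicative.ofAdd (-vIntK K v (1-u)) ≤ Multiplicative.ofAdd (0 : ℤ) := by
      rwa [← WithZero.coe_le_coe]
    simp only [Multiplicative.ofAdd_le] at this
    omega
  · rw [WithZero.coe_le_coe, Multiplicative.ofAdd_le] at h
    omega

open scoped Classical in
lemma vIntK_coe (v : HeightOneSpectrum (𝓞 K)) {r : 𝓞 K} (hr : r ≠ 0) :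
    vIntK K v (algebraMap (𝓞 K) K r) =
      ((Associates.mk v.asIdeal).count (Associates.mk (Ideal.span {r})).factors : ℤ) := by
  refine vIntK_eq_of K v ?_ ?_
  · simpa using hr
  · rw [v.valuation_of_algebraMap, IsDedekindDomain.HeightOneSpectrum.intValuation_apply,
      v.intValuationDef_if_neg hr]
    rfl

open scoped Classical in
lemma vIntK_coe_support (r : 𝓞 K) (hr : r ≠ 0) :
    {v : HeightOneSpectrum (𝓞 K) | vIntK K v (algebraMap (𝓞 K) K r) ≠ 0}.Finite := by
  have hspan : (Ideal.span {r} : Ideal (𝓞 K)) ≠ 0 := by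
    simpa [Ideal.span_singleton_eq_bot] using hr
  refine (Ideal.finite_factors hspan).subset ?_
  intro v hv
  simp only [Set.mem_setOf_eq, vIntK_coe K v hr] at hv
  have h1 : (Associates.mk v.asIdeal).count (Associates.mk (Ideal.span {r})).factors ≠ 0 := by
    exact_mod_cast hv
  have h2 := Associates.le_of_count_ne_zero (Associates.mk_ne_zero.mpr hspan)
    v.associates_irreducible h1
  exact Set.mem_setOf_eq ▸ Associates.dvd_of_mk_le_mk h2

lemma vIntK_support_finite {x : K} (hx : x ≠ 0) :
    {v : HeightOneSpectrum (𝓞 K) | vIntK K v x ≠ 0}.Finite := by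
  obtain ⟨n, d, hd, hx'⟩ := IsFractionRing.div_surjective (A := 𝓞 K) x
  have hd0 : d ≠ 0 := nonZeroDivisors.ne_zero hd
  have hdK : algebraMap (𝓞 K) K d ≠ 0 := by simpa using hd0
  have hn0 : n ≠ 0 := by
    rintro rfl; rw [← hx'] at hx; simp at hx
  have hnK : algebraMap (𝓞 K) K n ≠ 0 := by simpa using hn0
  refine ((vIntK_coe_support K n hn0).union (vIntK_coe_support K d hd0)).subset ?_
  intro v hv
  simp only [Set.mem_setOf_eq, Set.mem_union]
  by_contra hc
  push_neg at hc
  simp only [Set.mem_setOf_eq, ← hx', vIntK_div K v hnK hdK] at hv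
  omega

lemma absNormK_pos (v : HeightOneSpectrum (𝓞 K)) : 0 < Ideal.absNorm v.asIdeal := by
  exact Nat.pos_of_ne_zero (by simp [Ideal.absNorm_eq_zero_iff, v.ne_bot])

lemma logNormK_nonneg (v : HeightOneSpectrum (𝓞 K)) : 0 ≤ logNormK K v :=
  Real.log_nonneg (by exact_mod_cast absNormK_pos K v)

open scoped Classical in
lemma pf_coe {r : 𝓞 K} (hr : r ≠ 0) :
    ∑ w : InfinitePlace K, (w.mult : ℝ) * Real.log (w (algebraMap (𝓞 K) K r)) =
      ∑ᶠ v : HeightOneSpectrum (𝓞 K),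
        (vIntK K v (algebraMap (𝓞 K) K r) : ℝ) * logNormK K v := by
  have hrK : algebraMap (𝓞 K) K r ≠ 0 := by simpa using hr
  have hspan : (Ideal.span {r} : Ideal (𝓞 K)) ≠ 0 := by
    simpa [Ideal.span_singleton_eq_bot] using hr
  -- archimedean side
  have harch : ∑ w : InfinitePlace K, (w.mult : ℝ) * Real.log (w (algebraMap (𝓞 K) K r)) =
      Real.log (Ideal.absNorm (Ideal.span {r} : Ideal (𝓞 K))) := by
    have h1 : ∀ w : InfinitePlace K, (w.mult : ℝ) * Real.log (w (algebraMap (𝓞 K) K r)) =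
        Real.log ((w (algebraMap (𝓞 K) K r)) ^ w.mult) := by
      intro w; rw [Real.log_pow]
    simp_rw [h1]
    rw [← Real.log_prod]
    · rw [NumberField.InfinitePlace.prod_eq_abs_norm, ← Algebra.coe_norm_int,
        Ideal.absNorm_span_singleton]
      push_cast
      rw [Nat.cast_natAbs]
      push_cast
      ring_nf
    · intro w _
      exact pow_ne_zero _ (ne_of_gt (NumberField.InfinitePlace.pos_iff.mpr hrK))
  rw [harch]
  -- nonarchimedean side
  set T := (vIntK_coe_support K r hr).toFinset with hT
  have hsum : ∑ᶠ v : HeightOneSpectrum (𝓞 K),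
      (vIntK K v (algebraMap (𝓞 K) K r) : ℝ) * logNormK K v =
      ∑ v ∈ T, (vIntK K v (algebraMap (𝓞 K) K r) : ℝ) * logNormK K v := by
    refine finsum_eq_sum_of_support_subset _ ?_
    intro v hv
    simp only [Function.mem_support, ne_eq] at hv
    simp only [hT, Set.Finite.coe_toFinset, Set.mem_setOf_eq]
    intro h0
    exact hv (by rw [h0]; simp)
  rw [hsum]
  have hfac : (Ideal.span {r} : Ideal (𝓞 K)) =
      ∏ v ∈ T, v.maxPowDividing (Ideal.span {r}) := by
    conv_lhs => rw [← Ideal.finprod_heightOneSpectrum_factorization hspan]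
    refine finprod_eq_prod_of_mulSupport_subset _ ?_
    intro v hv
    simp only [Function.mem_mulSupport, IsDedekindDomain.HeightOneSpectrum.maxPowDividing] at hv
    simp only [hT, Set.Finite.coe_toFinset, Set.mem_setOf_eq, vIntK_coe K v hr]
    intro h0
    have : (Associates.mk v.asIdeal).count (Associates.mk (Ideal.span {r})).factors = 0 := by
      exact_mod_cast h0
    rw [this, pow_zero] at hv
    exact hv rfl
  rw [hfac, map_prod, Nat.cast_prod, Real.log_prod]
  · refine Finset.sum_congr rfl fun v _ => ?_
    rw [IsDedekindDomain.HeightOneSpectrum.maxPowDividing, map_pow, Nat.cast_pow, Real.log_pow,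
      vIntK_coe K v hr, logNormK]
    push_cast
    ring
  · intro v _
    rw [IsDedekindDomain.HeightOneSpectrum.maxPowDividing, map_pow, Nat.cast_pow]
    exact pow_ne_zero _ (by exact_mod_cast (absNormK_pos K v).ne')

lemma support_term_finite {x : K} (hx : x ≠ 0) :
    (Function.support fun v : HeightOneSpectrum (𝓞 K) =>
      (vIntK K v x : ℝ) * logNormK K v).Finite := by
  refine (vIntK_support_finite K hx).subset ?_
  intro v hv
  simp only [Function.mem_support, ne_eq] at hv
  simp only [Set.mem_setOf_eq]
  intro h0
  exact hv (by rw [h0]; simp)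

lemma pf {x : K} (hx : x ≠ 0) :
    ∑ w : InfinitePlace K, (w.mult : ℝ) * Real.log (w x) =
      ∑ᶠ v : HeightOneSpectrum (𝓞 K), (vIntK K v x : ℝ) * logNormK K v := by
  obtain ⟨n, d, hd, hx'⟩ := IsFractionRing.div_surjective (A := 𝓞 K) x
  have hd0 : d ≠ 0 := nonZeroDivisors.ne_zero hd
  have hdK : algebraMap (𝓞 K) K d ≠ 0 := by simpa using hd0
  have hn0 : n ≠ 0 := by rintro rfl; rw [← hx'] at hx; simp at hx
  have hnK : algebraMap (𝓞 K) K n ≠ 0 := by simpa using hn0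
  have hL : ∀ w : InfinitePlace K, (w.mult : ℝ) * Real.log (w x) =
      (w.mult : ℝ) * Real.log (w (algebraMap (𝓞 K) K n))
        - (w.mult : ℝ) * Real.log (w (algebraMap (𝓞 K) K d)) := by
    intro w
    rw [← hx', map_div₀, Real.log_div (by simpa using hnK) (by simpa using hdK)]
    ring
  simp_rw [hL, Finset.sum_sub_distrib, pf_coe K hn0, pf_coe K hd0]
  have hR : ∀ v : HeightOneSpectrum (𝓞 K), (vIntK K v x : ℝ) * logNormK K v =
      (vIntK K v (algebraMap (𝓞 K) K n) : ℝ) * logNormK K v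
        - (vIntK K v (algebraMap (𝓞 K) K d) : ℝ) * logNormK K v := by
    intro v
    rw [← hx', vIntK_div K v hnK hdK]
    push_cast
    ring
  rw [← finsum_sub_distrib (support_term_finite K hnK) (support_term_finite K hdK)]
  exact (finsum_congr hR).symm

lemma one_sub_divK {a b c : K} (hc : c ≠ 0) (habc : a + b = c) : (1 : K) - a / c = b / c := by
  field_simp
  linear_combination habc - 2 * habc

lemma div_ne_oneK {a b c : K} (hb : b ≠ 0) (hc : c ≠ 0) (habc : a + b = c) : a / c ≠ 1 := by
  intro h
  have hac : a = c := (div_eq_one_iff_eq hc).mp h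
  exact hb (by linear_combination habc - hac)

lemma arch_boundK {a b c : K} (hb : b ≠ 0) (hc : c ≠ 0) (habc : a + b = c)
    (w : InfinitePlace K) :
    Real.log (max (w a) (max (w b) (w c))) ≤
      Real.log (w c) + (Real.log (max (w (a / c)) 1) + Real.log 2) := by
  have hwc : 0 < w c := NumberField.InfinitePlace.pos_iff.mpr hc
  have hM : (0 : ℝ) < max (w (a / c)) 1 := lt_of_lt_of_le one_pos (le_max_right _ _)
  have hua : w a = w c * w (a / c) := by
    rw [← map_mul]
    congr 1
    field_simp
  have hub : w b = w c * w (1 - a / c) := by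
    rw [← map_mul]
    congr 1
    rw [one_sub_divK K hc habc]
    field_simp
  have h3 : w (1 - a / c) ≤ 1 + w (a / c) := by
    calc w (1 - a / c) ≤ w 1 + w (-(a / c)) := by
          rw [sub_eq_add_neg]; exact w.1.add_le _ _
      _ = 1 + w (a / c) := by
          rw [map_one]
          exact congrArg (1 + ·) (w.1.map_neg _)
  have h4 : w (a / c) ≤ max (w (a / c)) 1 := le_max_left _ _
  have h5 : (1 : ℝ) ≤ max (w (a / c)) 1 := le_max_right _ _
  have hineq : max (w a) (max (w b) (w c)) ≤ w c * (2 * max (w (a / c)) 1) := by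
    refine max_le ?_ (max_le ?_ ?_) <;> nlinarith [hwc.le]
  have hLpos : (0 : ℝ) < max (w a) (max (w b) (w c)) :=
    lt_of_lt_of_le hwc (le_trans (le_max_right _ _) (le_max_right _ _))
  calc Real.log (max (w a) (max (w b) (w c)))
      ≤ Real.log (w c * (2 * max (w (a / c)) 1)) := Real.log_le_log hLpos hineq
    _ = Real.log (w c) + (Real.log (max (w (a / c)) 1) + Real.log 2) := by
        rw [Real.log_mul hwc.ne' (by positivity), Real.log_mul (by norm_num) hM.ne']
        ring

lemma fin_splitK {a b c : K} (ha : a ≠ 0) (hb : b ≠ 0) (hc : c ≠ 0) (habc : a + b = c)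
    (v : HeightOneSpectrum (𝓞 K)) :
    ((max (-(vIntK K v a)) (max (-(vIntK K v b)) (-(vIntK K v c))) : ℤ) : ℝ) * logNormK K v
      = ((-(vIntK K v c) : ℤ) : ℝ) * logNormK K v
        + ((max (-(vIntK K v (a / c))) 0 : ℤ) : ℝ) * logNormK K v := by
  have hu0 : a / c ≠ 0 := div_ne_zero ha hc
  have hu1 : a / c ≠ 1 := div_ne_oneK K hb hc habc
  have e1 : vIntK K v (a / c) = vIntK K v a - vIntK K v c := vIntK_div K v ha hc
  have e2 : vIntK K v (b / c) = vIntK K v b - vIntK K v c := vIntK_div K v hb hc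
  have e3 := vIntK_one_sub K v hu0 hu1
  rw [one_sub_divK K hc habc, e2, e1] at e3
  rw [e1]
  have h : (max (-(vIntK K v a)) (max (-(vIntK K v b)) (-(vIntK K v c))) : ℤ)
      = -(vIntK K v c) + max (-(vIntK K v a - vIntK K v c)) 0 := by omega
  rw [h]
  push_cast
  ring

end Aux

/-- **The hypothesis Siegel(U,K) for `U = ℙ¹ ∖ {0,1,∞}` implies abc over `K`.**
Suppose there are `k₁ > 1`, `k₂ > 1`, `k₃ > 0` such that for every finite set `S` of nonzero
prime ideals of `O_K` and every `u ∈ K ∖ {0,1}` with both `u` and `1 - u` `S`-units,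
`h_K(u:1) ≤ k₁·∑_{𝔮 ∈ S} log N(𝔮) + k₂·log d_K + k₃`. Then for all nonzero `a, b, c ∈ K` with
`a + b = c`: `h_K(a:b:c) ≤ k₁·rad(a:b:c) + k₂·log d_K + k₃ + [K:ℚ]·log 2`. -/
theorem effective_siegel_implies_abc_numberField
    (K : Type) [Field K] [NumberField K]
    (k₁ k₂ k₃ : ℝ) (hk₁ : 1 < k₁) (hk₂ : 1 < k₂) (hk₃ : 0 < k₃)
    (hsiegel : ∀ S : Finset (HeightOneSpectrum (𝓞 K)), ∀ u : K, u ≠ 0 → u ≠ 1 →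
      (∀ v : HeightOneSpectrum (𝓞 K), v ∉ S → vIntK K v u = 0) →
      (∀ v : HeightOneSpectrum (𝓞 K), v ∉ S → vIntK K v (1 - u) = 0) →
      height1K K u ≤ k₁ * (∑ v ∈ S, logNormK K v) + k₂ * logDiscK K + k₃) :
    ∀ a b c : K, a ≠ 0 → b ≠ 0 → c ≠ 0 → a + b = c →
      heightProjK K a b c ≤ k₁ * radK K a b c + k₂ * logDiscK K + k₃
        + (Module.finrank ℚ K : ℝ) * Real.log 2 := by
  intro a b c ha hb hc habc
  classical
  have hu0 : a / c ≠ 0 := div_ne_zero ha hc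
  have hu1 : a / c ≠ 1 := div_ne_oneK K hb hc habc
  have h1u : (1 : K) - a / c = b / c := one_sub_divK K hc habc
  have hbu : (1 : K) - a / c ≠ 0 := by rw [h1u]; exact div_ne_zero hb hc
  have hfinu := vIntK_support_finite K hu0
  have hfin1u := vIntK_support_finite K hbu
  set S : Finset (HeightOneSpectrum (𝓞 K)) := (hfinu.union hfin1u).toFinset with hS
  have hSiegel : height1K K (a / c) ≤ k₁ * (∑ v ∈ S, logNormK K v) + k₂ * logDiscK K + k₃ := by
    refine hsiegel S (a / c) hu0 hu1 ?_ ?_ <;>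
    · intro v hv
      simp only [hS, Set.Finite.mem_toFinset, Set.mem_union, Set.mem_setOf_eq, not_or,
        not_not] at hv
      first
        | exact hv.1
        | exact hv.2
  have hmult : ∑ w : InfinitePlace K, (w.mult : ℝ) = (Module.finrank ℚ K : ℝ) := by
    exact_mod_cast NumberField.InfinitePlace.sum_mult_eq (K := K)
  -- archimedean bound
  have harch : (∑ w : InfinitePlace K, (w.mult : ℝ) * Real.log (max (w a) (max (w b) (w c))))
      ≤ (∑ w : InfinitePlace K, (w.mult : ℝ) * Real.log (w c))
        + ((∑ w : InfinitePlace K, (w.mult : ℝ) * Real.log (max (w (a / c)) 1))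
          + (Module.finrank ℚ K : ℝ) * Real.log 2) := by
    have hle : (∑ w : InfinitePlace K, (w.mult : ℝ) * Real.log (max (w a) (max (w b) (w c))))
        ≤ ∑ w : InfinitePlace K, (w.mult : ℝ) *
            (Real.log (w c) + (Real.log (max (w (a / c)) 1) + Real.log 2)) :=
      Finset.sum_le_sum fun w _ =>
        mul_le_mul_of_nonneg_left (arch_boundK K hb hc habc w) (by positivity)
    refine hle.trans (le_of_eq ?_)
    rw [← hmult]
    simp_rw [mul_add]
    rw [Finset.sum_add_distrib, Finset.sum_add_distrib, ← Finset.sum_mul]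
  -- non-archimedean splitting
  have hfs1 : (Function.support fun v : HeightOneSpectrum (𝓞 K) =>
      ((-(vIntK K v c) : ℤ) : ℝ) * logNormK K v).Finite := by
    refine (vIntK_support_finite K hc).subset ?_
    intro v hv
    simp only [Function.mem_support, ne_eq] at hv
    simp only [Set.mem_setOf_eq]
    intro h0
    exact hv (by rw [h0]; simp)
  have hfs2 : (Function.support fun v : HeightOneSpectrum (𝓞 K) =>
      ((max (-(vIntK K v (a / c))) 0 : ℤ) : ℝ) * logNormK K v).Finite := by
    refine (vIntK_support_finite K hu0).subset ?_
    intro v hv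
    simp only [Function.mem_support, ne_eq] at hv
    simp only [Set.mem_setOf_eq]
    intro h0
    exact hv (by rw [h0]; simp)
  have hfin : (∑ᶠ v : HeightOneSpectrum (𝓞 K),
        ((max (-(vIntK K v a)) (max (-(vIntK K v b)) (-(vIntK K v c))) : ℤ) : ℝ) * logNormK K v)
      = (∑ᶠ v : HeightOneSpectrum (𝓞 K), ((-(vIntK K v c) : ℤ) : ℝ) * logNormK K v)
        + ∑ᶠ v : HeightOneSpectrum (𝓞 K),
            ((max (-(vIntK K v (a / c))) 0 : ℤ) : ℝ) * logNormK K v := by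
    rw [← finsum_add_distrib hfs1 hfs2]
    exact finsum_congr (fin_splitK K ha hb hc habc)
  have hpf : (∑ᶠ v : HeightOneSpectrum (𝓞 K), ((-(vIntK K v c) : ℤ) : ℝ) * logNormK K v)
      = -(∑ w : InfinitePlace K, (w.mult : ℝ) * Real.log (w c)) := by
    rw [pf K hc, ← finsum_neg_distrib]
    exact finsum_congr fun v => by push_cast; ring
  have key1 : heightProjK K a b c ≤ height1K K (a / c)
      + (Module.finrank ℚ K : ℝ) * Real.log 2 := by
    rw [heightProjK, height1K, hfin, hpf]
    linarith [harch]
  -- radical bound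
  have hradsupfin : (Function.support fun v : HeightOneSpectrum (𝓞 K) =>
      if 2 ≤ ({vIntK K v a, vIntK K v b, vIntK K v c} : Finset ℤ).card
      then logNormK K v else 0).Finite := by
    refine (((vIntK_support_finite K ha).union (vIntK_support_finite K hb)).union
      (vIntK_support_finite K hc)).subset ?_
    intro v hv
    simp only [Function.mem_support, ne_eq] at hv
    by_contra hcon
    simp only [Set.mem_union, Set.mem_setOf_eq, not_or, not_not] at hcon
    obtain ⟨⟨h1, h2⟩, h3⟩ := hcon
    rw [h1, h2, h3] at hv
    simp at hv
  have hrad : radK K a b c = ∑ v ∈ S ∪ hradsupfin.toFinset,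
      if 2 ≤ ({vIntK K v a, vIntK K v b, vIntK K v c} : Finset ℤ).card
      then logNormK K v else 0 := by
    rw [radK]
    refine finsum_eq_sum_of_support_subset _ ?_
    intro v hv
    simp only [Finset.coe_union, Set.Finite.coe_toFinset, Set.mem_union]
    exact Or.inr hv
  have hcond : ∀ v ∈ S, 2 ≤ ({vIntK K v a, vIntK K v b, vIntK K v c} : Finset ℤ).card := by
    intro v hv
    simp only [hS, Set.Finite.mem_toFinset, Set.mem_union, Set.mem_setOf_eq] at hv
    have e1 : vIntK K v (a / c) = vIntK K v a - vIntK K v c := vIntK_div K v ha hc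
    have e2 : vIntK K v (b / c) = vIntK K v b - vIntK K v c := vIntK_div K v hb hc
    refine Finset.one_lt_card.mpr ?_
    rcases hv with h | h
    · exact ⟨vIntK K v a, by simp, vIntK K v c, by simp, by rw [e1] at h; omega⟩
    · rw [h1u, e2] at h
      exact ⟨vIntK K v b, by simp, vIntK K v c, by simp, by omega⟩
  have key2 : ∑ v ∈ S, logNormK K v ≤ radK K a b c := by
    rw [hrad]
    calc ∑ v ∈ S, logNormK K v
        = ∑ v ∈ S, (if 2 ≤ ({vIntK K v a, vIntK K v b, vIntK K v c} : Finset ℤ).card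
            then logNormK K v else 0) :=
          Finset.sum_congr rfl fun v hv => (if_pos (hcond v hv)).symm
      _ ≤ _ := by
          refine Finset.sum_le_sum_of_subset_of_nonneg Finset.subset_union_left
            fun v _ _ => ?_
          split
          · exact logNormK_nonneg K v
          · exact le_refl 0
  have hk₁0 : (0 : ℝ) ≤ k₁ := le_of_lt (lt_trans one_pos hk₁)
  have := mul_le_mul_of_nonneg_left key2 hk₁0
  linarith [key1, hSiegel]
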